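/- Consider a bipartite structure with finite group set G and arm set A, where each group g has a nonempty arm set A_g ⊆ A with ⋃_g A_g = A. Then the LP value t₀ := min over x ≥ 0 of t subject to (∑_{a ∈ A_g} x_{g,a} ≤ t for all g) and (∑_{g : a ∈ A_g} x_{g,a} ≥ 1 for all a ∈ A) equals max over nonempty G' ⊆ G of |Cov(G') \ Cov(G \ G')| / |G'|, where Cov(G') := ⋃_{g ∈ G'} A_g. -/

import Mathlib

open Finset


lemma hall_construct {G A : Type*} [Fintype G] [Fintype A] [DecidableEq G] [DecidableEq A]
    (Ag : G → Finset A) (N q : ℕ) (hN : 0 < N)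
    (hall : ∀ B : Finset A,
      N * B.card ≤ q * (B.biUnion (fun a => univ.filter (fun g => a ∈ Ag g))).card) :
    ∃ x : G → A → ℝ, (∀ g a, 0 ≤ x g a) ∧
      (∀ g, ∑ a ∈ Ag g, x g a ≤ (q : ℝ) / N) ∧
      (∀ a : A, 1 ≤ ∑ g ∈ univ.filter (fun g => a ∈ Ag g), x g a) := by
  classical
  have hallcond : ∀ s : Finset (A × Fin N), s.card ≤ (s.biUnion (fun p : A × Fin N =>
      (univ.filter (fun g => p.1 ∈ Ag g)) ×ˢ (univ : Finset (Fin q)))).card := by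
    intro s
    have h1 : s ⊆ (s.image Prod.fst) ×ˢ (univ : Finset (Fin N)) := by
      intro p hp
      rw [Finset.mem_product]
      exact ⟨Finset.mem_image_of_mem _ hp, Finset.mem_univ _⟩
    have h2 : s.biUnion (fun p : A × Fin N =>
        (univ.filter (fun g => p.1 ∈ Ag g)) ×ˢ (univ : Finset (Fin q)))
        = ((s.image Prod.fst).biUnion (fun a => univ.filter (fun g => a ∈ Ag g)))
          ×ˢ (univ : Finset (Fin q)) := by
      ext p
      simp [Finset.mem_biUnion, Finset.mem_product]
    calc s.card ≤ (s.image Prod.fst).card * N := by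
          simpa [Finset.card_product] using Finset.card_le_card h1
      _ = N * (s.image Prod.fst).card := Nat.mul_comm _ _
      _ ≤ q * ((s.image Prod.fst).biUnion (fun a => univ.filter (fun g => a ∈ Ag g))).card :=
          hall _
      _ = _ := by rw [h2, Finset.card_product, Finset.card_univ, Fintype.card_fin, Nat.mul_comm]
  obtain ⟨f, hfinj, hfmem⟩ :=
    (Finset.all_card_le_biUnion_card_iff_exists_injective
      (fun p : A × Fin N => (univ.filter (fun g => p.1 ∈ Ag g)) ×ˢ (univ : Finset (Fin q)))).mp
      hallcond
  refine ⟨fun g a => ((univ.filter (fun i : Fin N => (f (a, i)).1 = g)).card : ℝ) / N,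
    fun g a => by positivity, ?_, ?_⟩
  · intro g
    rw [← Finset.sum_div, div_le_div_iff_of_pos_right (by exact_mod_cast hN)]
    have key : ∑ a ∈ Ag g, (univ.filter (fun i : Fin N => (f (a, i)).1 = g)).card ≤ q := by
      set s : Finset (A × Fin N) := ((Ag g) ×ˢ (univ : Finset (Fin N))).filter
        (fun p => (f p).1 = g) with hs
      have h1 : s.card = ∑ a ∈ Ag g, (s.filter (fun p => p.1 = a)).card := by
        apply Finset.card_eq_sum_card_fiberwise
        intro p hp
        simp only [hs, Finset.mem_coe, Finset.mem_filter, Finset.mem_product] at hp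
        exact hp.1.1
      have h2 : ∀ a ∈ Ag g, (s.filter (fun p => p.1 = a)).card
          = (univ.filter (fun i : Fin N => (f (a, i)).1 = g)).card := by
        intro a ha
        have hinj : Function.Injective (fun i : Fin N => (a, i)) := by
          intro i j h; simpa using h
        rw [← Finset.card_image_of_injective _ hinj]
        congr 1
        ext p
        obtain ⟨a', i⟩ := p
        simp only [hs, Finset.mem_filter, Finset.mem_product, Finset.mem_image,
          Finset.mem_univ, true_and, and_true, Prod.mk.injEq]
        constructor
        · rintro ⟨⟨h1', hg⟩, rfl⟩
          exact ⟨i, hg, rfl, rfl⟩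
        · rintro ⟨j, hg, rfl, rfl⟩
          exact ⟨⟨ha, hg⟩, rfl⟩
      have h3 : s.card ≤ q := by
        have hmaps : ∀ p ∈ s, f p ∈ ({g} : Finset G) ×ˢ (univ : Finset (Fin q)) := by
          intro p hp
          simp only [hs, Finset.mem_filter] at hp
          rw [Finset.mem_product]
          exact ⟨Finset.mem_singleton.mpr hp.2, Finset.mem_univ _⟩
        have := Finset.card_le_card_of_injOn f hmaps hfinj.injOn
        simpa [Finset.card_product] using this
      calc ∑ a ∈ Ag g, (univ.filter (fun i : Fin N => (f (a, i)).1 = g)).card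
          = ∑ a ∈ Ag g, (s.filter (fun p => p.1 = a)).card := by
            exact (Finset.sum_congr rfl h2).symm
        _ = s.card := h1.symm
        _ ≤ q := h3
    calc ∑ a ∈ Ag g, ((univ.filter (fun i : Fin N => (f (a, i)).1 = g)).card : ℝ)
        = ((∑ a ∈ Ag g, (univ.filter (fun i : Fin N => (f (a, i)).1 = g)).card : ℕ) : ℝ) := by
          push_cast; ring
      _ ≤ (q : ℝ) := by exact_mod_cast key
  · intro a
    have hcount : (univ : Finset (Fin N)).card
        = ∑ g ∈ univ.filter (fun g => a ∈ Ag g),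
            (univ.filter (fun i : Fin N => (f (a, i)).1 = g)).card := by
      apply Finset.card_eq_sum_card_fiberwise
      intro i _
      have := hfmem (a, i)
      simp [Finset.mem_product] at this
      simpa using this
    rw [← Finset.sum_div]
    rw [← Nat.cast_sum, ← hcount]
    simp [Finset.card_univ]
    rw [div_self (by exact_mod_cast hN.ne')]

lemma weak_dual {G A : Type*} [Fintype G] [Fintype A] [DecidableEq G] [DecidableEq A]
    (Ag : G → Finset A) (t : ℝ) (x : G → A → ℝ) (hx0 : ∀ g a, 0 ≤ x g a)
    (hload : ∀ g, ∑ a ∈ Ag g, x g a ≤ t)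
    (hcov' : ∀ a : A, 1 ≤ ∑ g ∈ univ.filter (fun g => a ∈ Ag g), x g a)
    (G' : Finset G) (hG' : G'.Nonempty) :
    ((G'.biUnion Ag \ (univ \ G').biUnion Ag).card : ℝ) / G'.card ≤ t := by
  classical
  set D := G'.biUnion Ag \ (univ \ G').biUnion Ag with hD
  have hDnotin : ∀ a ∈ D, ∀ g, g ∉ G' → a ∉ Ag g := by
    intro a ha g hg hag
    rw [hD, Finset.mem_sdiff] at ha
    exact ha.2 (Finset.mem_biUnion.mpr ⟨g, by simp [hg], hag⟩)
  have key : (D.card : ℝ) ≤ t * G'.card := by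
    calc (D.card : ℝ) = ∑ _a ∈ D, (1 : ℝ) := by simp
      _ ≤ ∑ a ∈ D, ∑ g ∈ univ.filter (fun g => a ∈ Ag g), x g a :=
          Finset.sum_le_sum (fun a _ => hcov' a)
      _ = ∑ a ∈ D, ∑ g ∈ univ, if a ∈ Ag g then x g a else 0 :=
          Finset.sum_congr rfl (fun a _ => Finset.sum_filter _ _)
      _ = ∑ g ∈ univ, ∑ a ∈ D, if a ∈ Ag g then x g a else 0 := Finset.sum_comm
      _ = ∑ g ∈ G', ∑ a ∈ D, if a ∈ Ag g then x g a else 0 := by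
          refine (Finset.sum_subset (Finset.subset_univ G') ?_).symm
          intro g _ hg
          refine Finset.sum_eq_zero (fun a ha => ?_)
          rw [if_neg (hDnotin a ha g hg)]
      _ ≤ ∑ g ∈ G', ∑ a ∈ Ag g, x g a := by
          refine Finset.sum_le_sum (fun g _ => ?_)
          rw [← Finset.sum_filter]
          refine Finset.sum_le_sum_of_subset_of_nonneg ?_ (fun a ha _ => hx0 g a)
          intro a ha
          exact (Finset.mem_filter.mp ha).2
      _ ≤ ∑ _g ∈ G', t := Finset.sum_le_sum (fun g _ => hload g)
      _ = t * G'.card := by rw [Finset.sum_const, nsmul_eq_mul]; ring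
  have hpos : (0 : ℝ) < G'.card := by exact_mod_cast Finset.card_pos.mpr hG'
  rw [div_le_iff₀ hpos]
  linarith

/-- LP duality / Hall-type characterization of the minimum fractional time `t₀` needed
for the groups to pull every arm once:
`t₀ = max_{∅ ≠ G' ⊆ G} |Cov(G') \ Cov(G \ G')| / |G'|`. -/
theorem stmt7 {G A : Type*} [Fintype G] [Fintype A] [DecidableEq G] [DecidableEq A]
    (Ag : G → Finset A) (hne : ∀ g, (Ag g).Nonempty)
    (hcov : ∀ a : A, ∃ g, a ∈ Ag g) :
    sInf {t : ℝ | 0 ≤ t ∧ ∃ x : G → A → ℝ,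
        (∀ g a, 0 ≤ x g a) ∧
        (∀ g, ∑ a ∈ Ag g, x g a ≤ t) ∧
        (∀ a : A, 1 ≤ ∑ g ∈ univ.filter (fun g => a ∈ Ag g), x g a)} =
    sSup {r : ℝ | ∃ G' : Finset G, G'.Nonempty ∧
        r = ((G'.biUnion Ag \ (univ \ G').biUnion Ag).card : ℝ) / G'.card} := by
  classical
  set S : Set ℝ := {t : ℝ | 0 ≤ t ∧ ∃ x : G → A → ℝ,
        (∀ g a, 0 ≤ x g a) ∧
        (∀ g, ∑ a ∈ Ag g, x g a ≤ t) ∧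
        (∀ a : A, 1 ≤ ∑ g ∈ univ.filter (fun g => a ∈ Ag g), x g a)} with hSdef
  set T : Set ℝ := {r : ℝ | ∃ G' : Finset G, G'.Nonempty ∧
        r = ((G'.biUnion Ag \ (univ \ G').biUnion Ag).card : ℝ) / G'.card} with hTdef
  -- bddBelow S
  have hSbdd : BddBelow S := ⟨0, fun t ht => ht.1⟩
  rcases isEmpty_or_nonempty G with hG | hG
  · -- degenerate case: no groups, hence no arms
    haveI : IsEmpty A := ⟨fun a => (hcov a).elim (fun g _ => IsEmpty.elim hG g)⟩
    have hTe : T = ∅ := by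
      rw [Set.eq_empty_iff_forall_notMem]
      rintro r ⟨G', hG', -⟩
      obtain ⟨g, -⟩ := hG'
      exact IsEmpty.elim hG g
    have hSe : S = Set.Ici 0 := by
      ext t
      simp only [hSdef, Set.mem_setOf_eq, Set.mem_Ici]
      constructor
      · exact fun h => h.1
      · intro h
        exact ⟨h, fun _ _ => 0, fun g a => le_refl _, fun g => IsEmpty.elim hG g,
          fun a => IsEmpty.elim ‹IsEmpty A› a⟩
    rw [hTe, hSe, Real.sSup_empty, csInf_Ici]
  · -- main case
    have hTne : T.Nonempty := ⟨_, (univ : Finset G), Finset.univ_nonempty, rfl⟩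
    have hTfin : T.Finite := by
      apply Set.Finite.subset (Set.finite_range
        (fun G' : Finset G => ((G'.biUnion Ag \ (univ \ G').biUnion Ag).card : ℝ) / G'.card))
      rintro r ⟨G', -, rfl⟩
      exact ⟨G', rfl⟩
    have hTbdd : BddAbove T := hTfin.bddAbove
    set t₀ := sSup T with ht₀def
    have ht₀mem : t₀ ∈ T := hTne.csSup_mem hTfin
    have hle : ∀ r ∈ T, r ≤ t₀ := fun r hr => le_csSup hTbdd hr
    obtain ⟨G₀, hG₀ne, ht₀eq⟩ := ht₀mem
    have ht₀nonneg : 0 ≤ t₀ := by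
      rw [ht₀eq]; positivity
    -- strong duality: t₀ ∈ S
    set N := G₀.card with hNdef
    set q := (G₀.biUnion Ag \ (univ \ G₀).biUnion Ag).card with hqdef
    have hN : 0 < N := Finset.card_pos.mpr hG₀ne
    have hNR : (0 : ℝ) < N := by exact_mod_cast hN
    have hqN : (q : ℝ) = N * t₀ := by
      rw [ht₀eq]; field_simp
    have hall : ∀ B : Finset A,
        N * B.card ≤ q * (B.biUnion (fun a => univ.filter (fun g => a ∈ Ag g))).card := by
      intro B
      rcases B.eq_empty_or_nonempty with rfl | hB
      · simp
      set G'' := B.biUnion (fun a => univ.filter (fun g => a ∈ Ag g)) with hG''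
      have hG''ne : G''.Nonempty := by
        obtain ⟨a, ha⟩ := hB
        obtain ⟨g, hg⟩ := hcov a
        exact ⟨g, Finset.mem_biUnion.mpr ⟨a, ha, by simp [hg]⟩⟩
      have hBD : B ⊆ G''.biUnion Ag \ (univ \ G'').biUnion Ag := by
        intro a ha
        rw [Finset.mem_sdiff]
        constructor
        · obtain ⟨g, hg⟩ := hcov a
          exact Finset.mem_biUnion.mpr ⟨g, Finset.mem_biUnion.mpr ⟨a, ha, by simp [hg]⟩, hg⟩
        · intro hmem
          obtain ⟨g, hg1, hg2⟩ := Finset.mem_biUnion.mp hmem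
          rw [Finset.mem_sdiff] at hg1
          exact hg1.2 (Finset.mem_biUnion.mpr ⟨a, ha, by simp [hg2]⟩)
      have hr : ((G''.biUnion Ag \ (univ \ G'').biUnion Ag).card : ℝ) / G''.card ≤ t₀ :=
        hle _ ⟨G'', hG''ne, rfl⟩
      have hG''pos : (0 : ℝ) < G''.card := by
        exact_mod_cast Finset.card_pos.mpr hG''ne
      rw [div_le_iff₀ hG''pos] at hr
      have hBcard : (B.card : ℝ) ≤ t₀ * G''.card :=
        le_trans (by exact_mod_cast Finset.card_le_card hBD) hr
      have : (N : ℝ) * B.card ≤ (q : ℝ) * G''.card := by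
        rw [hqN]
        calc (N : ℝ) * B.card ≤ (N : ℝ) * (t₀ * G''.card) := by
              exact mul_le_mul_of_nonneg_left hBcard (le_of_lt hNR)
          _ = (N : ℝ) * t₀ * G''.card := by ring
      exact_mod_cast this
    obtain ⟨x, hx0, hxload, hxcov⟩ := hall_construct Ag N q hN hall
    have hqNt : (q : ℝ) / N = t₀ := by
      rw [hqN]; field_simp
    have ht₀S : t₀ ∈ S := by
      refine ⟨ht₀nonneg, x, hx0, fun g => ?_, hxcov⟩
      rw [← hqNt]; exact hxload g
    apply le_antisymm
    · exact csInf_le hSbdd ht₀S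
    · refine le_csInf ⟨t₀, ht₀S⟩ (fun t ht => ?_)
      obtain ⟨ht0, xx, hxx0, hxxload, hxxcov⟩ := ht
      refine Real.sSup_le ?_ ht0
      rintro r ⟨G', hG'ne, rfl⟩
      exact weak_dual Ag t xx hxx0 hxxload hxxcov G' hG'ne
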